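/- Let ((x_n, r_n))_{n≥1} be a system in [0,1]^d satisfying the weak redundancy condition C_1 with sequence (N_j). Then for every δ ≥ 1, the Hausdorff dimension of L_δ = {x : |x - x_n| ≤ r_n^δ for infinitely many n} is at most d/δ. -/

import Mathlib

open Metric Set Filter

noncomputable section

/-- `n` is an irreducible index for the sequence of centers `x`: the point `x n`
has not appeared before. The irreducible subsystem of a system retains exactly the
couples `(x n, r n)` for irreducible `n`. -/
def Irred {α : Type*} (x : ℕ → α) (n : ℕ) : Prop := ∀ m < n, x m ≠ x n

/-- The set `T_j` of irreducible indices whose radius lies in `(2^{-(j+1)}, 2^{-j}]`. -/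
def Tset {d : ℕ} (x : ℕ → Fin d → ℝ) (r : ℕ → ℝ) (j : ℕ) : Set ℕ :=
  {n | Irred x n ∧ ((2:ℝ) ^ (j + 1))⁻¹ < r n ∧ r n ≤ ((2:ℝ) ^ j)⁻¹}

/-- Condition `C₁` (weak redundancy): there is a non-decreasing integer sequence `N j ≥ 1`
with `log₂ (N j) / j → 0` such that each `T_j` can be partitioned into at most `N j`
classes (given by a colouring `c`), within each of which the balls `B(x n, r n)` are
pairwise disjoint. -/
def WeakRedundancy {d : ℕ} (x : ℕ → Fin d → ℝ) (r : ℕ → ℝ) (N : ℕ → ℕ) : Prop :=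
  Monotone N ∧ (∀ j, 1 ≤ N j) ∧
  Tendsto (fun j : ℕ => Real.logb 2 (N j) / j) atTop (nhds 0) ∧
  ∀ j, ∃ c : ℕ → ℕ, (∀ n ∈ Tset x r j, c n < N j) ∧
    ∀ m ∈ Tset x r j, ∀ n ∈ Tset x r j, m ≠ n → c m = c n →
      Disjoint (closedBall (x m) (r m)) (closedBall (x n) (r n))

open ENNReal MeasureTheory

lemma color_card {d : ℕ} (x : ℕ → Fin d → ℝ) (hx : ∀ n i, x n i ∈ Icc (0:ℝ) 1)
    (r : ℕ → ℝ) (j : ℕ) (S : Set ℕ) (hS : S ⊆ Tset x r j)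
    (hdisj : S.Pairwise fun m n => Disjoint (closedBall (x m) (r m)) (closedBall (x n) (r n))) :
    S.Finite ∧ (S.ncard : ℝ) ≤ 4 ^ d * ((2:ℝ) ^ j) ^ d := by
  set ρ : ℝ := ((2:ℝ) ^ (j + 1))⁻¹ with hρdef
  have hρ : 0 < ρ := by positivity
  have hρ1 : ρ ≤ 1 := by
    rw [hρdef]
    rw [inv_le_one_iff₀]
    right; exact one_le_pow₀ one_le_two
  have key : ∀ F : Finset ℕ, ↑F ⊆ S → (F.card : ℝ) ≤ 4 ^ d * ((2:ℝ) ^ j) ^ d := by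
    intro F hF
    have hρr : ∀ n ∈ S, ρ < r n := fun n hn => (hS hn).2.1
    have hdisj' : (↑F : Set ℕ).PairwiseDisjoint fun n => closedBall (x n) ρ := by
      intro m hm n hn hmn
      exact ((hdisj (hF hm) (hF hn) hmn)).mono
        (closedBall_subset_closedBall (hρr m (hF hm)).le)
        (closedBall_subset_closedBall (hρr n (hF hn)).le)
    have hvol : ∀ n : ℕ, volume (closedBall (x n) ρ) = ENNReal.ofReal ((2*ρ) ^ d) := by
      intro n
      rw [Real.volume_pi_closedBall (x n) hρ.le, Fintype.card_fin]
    have hsub2 : (⋃ n ∈ F, closedBall (x n) ρ) ⊆ closedBall (0 : Fin d → ℝ) 2 := by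
      intro y hy
      simp only [mem_iUnion] at hy
      obtain ⟨n, _, hn⟩ := hy
      have h1 : dist (x n) (0 : Fin d → ℝ) ≤ 1 := by
        rw [dist_pi_le_iff zero_le_one]
        intro i
        have := hx n i
        rw [Real.dist_eq]
        simp only [Pi.zero_apply, sub_zero]
        rw [abs_le]; constructor <;> [linarith [this.1]; linarith [this.2]]
      have h2 : dist y (x n) ≤ ρ := mem_closedBall.mp hn
      have : dist y (0 : Fin d → ℝ) ≤ 2 := by
        calc dist y 0 ≤ dist y (x n) + dist (x n) 0 := dist_triangle _ _ _
          _ ≤ ρ + 1 := add_le_add h2 h1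
          _ ≤ 2 := by linarith
      exact mem_closedBall.mpr (by simpa using this)
    have hsum : volume (⋃ n ∈ F, closedBall (x n) ρ)
        = ∑ n ∈ F, volume (closedBall (x n) ρ) :=
      measure_biUnion_finset hdisj' fun n _ => measurableSet_closedBall
    have hle : (F.card : ℝ≥0∞) * ENNReal.ofReal ((2*ρ) ^ d) ≤ ENNReal.ofReal (4 ^ d) := by
      calc (F.card : ℝ≥0∞) * ENNReal.ofReal ((2*ρ) ^ d)
          = ∑ n ∈ F, volume (closedBall (x n) ρ) := by
            simp [hvol, Finset.sum_const, nsmul_eq_mul]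
        _ = volume (⋃ n ∈ F, closedBall (x n) ρ) := hsum.symm
        _ ≤ volume (closedBall (0 : Fin d → ℝ) 2) := measure_mono hsub2
        _ = ENNReal.ofReal (4 ^ d) := by
            rw [Real.volume_pi_closedBall _ (by norm_num : (0:ℝ) ≤ 2), Fintype.card_fin]
            norm_num
    have hreal : (F.card : ℝ) * (2*ρ) ^ d ≤ 4 ^ d := by
      rw [← ENNReal.ofReal_natCast, ← ENNReal.ofReal_mul (by positivity)] at hle
      exact (ENNReal.ofReal_le_ofReal_iff (by positivity)).mp hle
    have h2ρ : 2 * ρ = ((2:ℝ) ^ j)⁻¹ := by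
      rw [hρdef, pow_succ]
      field_simp
    rw [h2ρ] at hreal
    have h2jd : (0:ℝ) < ((2:ℝ) ^ j) ^ d := by positivity
    calc (F.card : ℝ) = (F.card : ℝ) * (((2:ℝ) ^ j)⁻¹) ^ d * ((2:ℝ) ^ j) ^ d := by
          rw [inv_pow]; field_simp
      _ ≤ 4 ^ d * ((2:ℝ) ^ j) ^ d := mul_le_mul_of_nonneg_right hreal h2jd.le
  have hfin : S.Finite := by
    by_contra hinf
    obtain ⟨F, hFS, hFcard⟩ := (Set.Infinite.exists_subset_card_eq hinf) (⌈(4:ℝ) ^ d * ((2:ℝ) ^ j) ^ d⌉₊ + 1)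
    have := key F hFS
    rw [hFcard] at this
    have h2 : (4:ℝ) ^ d * ((2:ℝ) ^ j) ^ d ≤ ⌈(4:ℝ) ^ d * ((2:ℝ) ^ j) ^ d⌉₊ := Nat.le_ceil _
    push_cast at this
    linarith
  refine ⟨hfin, ?_⟩
  rw [Set.ncard_eq_toFinset_card _ hfin]
  exact key hfin.toFinset (by simp)


lemma tset_card {d : ℕ} (x : ℕ → Fin d → ℝ) (hx : ∀ n i, x n i ∈ Icc (0:ℝ) 1)
    (r : ℕ → ℝ) (N : ℕ → ℕ) (hC1 : WeakRedundancy x r N) (j : ℕ) :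
    (Tset x r j).Finite ∧ ((Tset x r j).ncard : ℝ) ≤ (N j) * (4 ^ d * ((2:ℝ) ^ j) ^ d) := by
  obtain ⟨c, hc1, hc2⟩ := hC1.2.2.2 j
  set S : ℕ → Set ℕ := fun i => {n | n ∈ Tset x r j ∧ c n = i} with hSdef
  have hScol : ∀ i, (S i).Finite ∧ ((S i).ncard : ℝ) ≤ 4 ^ d * ((2:ℝ) ^ j) ^ d := by
    intro i
    refine color_card x hx r j (S i) (fun n hn => hn.1) ?_
    intro m hm n hn hmn
    exact hc2 m hm.1 n hn.1 hmn (hm.2.trans hn.2.symm)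
  set G : Finset ℕ := (Finset.range (N j)).biUnion (fun i => (hScol i).1.toFinset) with hGdef
  have hTG : Tset x r j ⊆ ↑G := by
    intro n hn
    simp only [hGdef, Finset.coe_biUnion, Finset.mem_coe, Finset.mem_range, mem_iUnion,
      Set.Finite.mem_toFinset]
    exact ⟨c n, hc1 n hn, hn, rfl⟩
  have hfin : (Tset x r j).Finite := (G.finite_toSet).subset hTG
  refine ⟨hfin, ?_⟩
  have h1 : (Tset x r j).ncard ≤ G.card := by
    rw [← Set.ncard_coe_finset]
    exact Set.ncard_le_ncard hTG (G.finite_toSet)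
  have h2 : (G.card : ℝ) ≤ ∑ i ∈ Finset.range (N j), ((S i).ncard : ℝ) := by
    have := Finset.card_biUnion_le (s := Finset.range (N j)) (t := fun i => (hScol i).1.toFinset)
    calc (G.card : ℝ) ≤ ((∑ i ∈ Finset.range (N j), ((hScol i).1.toFinset).card : ℕ) : ℝ) := by
          exact_mod_cast this
      _ = ∑ i ∈ Finset.range (N j), ((S i).ncard : ℝ) := by
          push_cast
          refine Finset.sum_congr rfl fun i _ => ?_
          congr 1
          exact (Set.ncard_eq_toFinset_card _ (hScol i).1).symm
  have h3 : ∑ i ∈ Finset.range (N j), ((S i).ncard : ℝ)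
      ≤ (N j) * (4 ^ d * ((2:ℝ) ^ j) ^ d) := by
    calc ∑ i ∈ Finset.range (N j), ((S i).ncard : ℝ)
        ≤ ∑ _i ∈ Finset.range (N j), (4 ^ d * ((2:ℝ) ^ j) ^ d) :=
          Finset.sum_le_sum fun i _ => (hScol i).2
      _ = (N j) * (4 ^ d * ((2:ℝ) ^ j) ^ d) := by
          rw [Finset.sum_const, Finset.card_range, nsmul_eq_mul]
  calc ((Tset x r j).ncard : ℝ) ≤ (G.card : ℝ) := by exact_mod_cast h1
    _ ≤ _ := h2.trans h3


lemma decomp {d : ℕ} (x : ℕ → Fin d → ℝ) (r : ℕ → ℝ) (hrpos : ∀ n, 0 < r n)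
    (hrmono : Antitone r) (hrlim : Tendsto r atTop (nhds 0)) (δ : ℝ) (hδ : 1 ≤ δ) :
    {y : Fin d → ℝ | ∃ᶠ n in atTop, dist y (x n) ≤ r n ^ δ} ⊆
      {y | ∃ᶠ n in atTop, Irred x n ∧ dist y (x n) ≤ r n ^ δ} ∪ Set.range x := by
  intro y hy
  by_cases hyr : y ∈ Set.range x
  · exact Or.inr hyr
  · left
    have hA : {n | dist y (x n) ≤ r n ^ δ}.Infinite :=
      Nat.frequently_atTop_iff_infinite.mp hy
    set A := {n | dist y (x n) ≤ r n ^ δ} with hAdef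
    have hex : ∀ n : ℕ, ∃ m, x m = x n := fun n => ⟨n, rfl⟩
    set rep : ℕ → ℕ := fun n => Nat.find (hex n) with hrepdef
    have hrep_eq : ∀ n, x (rep n) = x n := fun n => Nat.find_spec (hex n)
    have hrep_le : ∀ n, rep n ≤ n := fun n => Nat.find_min' (hex n) rfl
    have hrep_irr : ∀ n, Irred x (rep n) := by
      intro n k hk hkeq
      exact Nat.find_min (hex n) hk (hkeq.trans (hrep_eq n))
    set B := {m | Irred x m ∧ dist y (x m) ≤ r m ^ δ} with hBdef
    have hrepB : ∀ n ∈ A, rep n ∈ B := by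
      intro n hn
      refine ⟨hrep_irr n, ?_⟩
      rw [hrep_eq n]
      refine le_trans hn (Real.rpow_le_rpow (hrpos n).le (hrmono (hrep_le n))
        (le_trans zero_le_one hδ))
    rw [Set.mem_setOf_eq, Nat.frequently_atTop_iff_infinite]
    by_contra hBfin
    rw [Set.not_infinite] at hBfin
    have hcover : A ⊆ ⋃ m ∈ B, {n ∈ A | x n = x m} := by
      intro n hn
      exact Set.mem_biUnion (hrepB n hn) ⟨hn, (hrep_eq n).symm⟩
    have hCex : ∃ m ∈ B, {n ∈ A | x n = x m}.Infinite := by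
      by_contra hall
      push_neg at hall
      exact hA (Set.Finite.subset (Set.Finite.biUnion hBfin hall) hcover)
    obtain ⟨m, hmB, hCinf⟩ := hCex
    have hym : y = x m := by
      by_contra hne
      have hdpos : 0 < dist y (x m) := dist_pos.mpr (fun h => hne h)
      have hev : ∀ᶠ n in atTop, r n < min 1 (dist y (x m)) :=
        hrlim.eventually (gt_mem_nhds (lt_min one_pos hdpos))
      obtain ⟨M, hM⟩ := eventually_atTop.mp hev
      obtain ⟨n, hnC, hnM⟩ := hCinf.exists_gt M
      have h1 : r n < min 1 (dist y (x m)) := hM n hnM.le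
      have h2 : r n ^ δ ≤ r n ^ (1:ℝ) :=
        Real.rpow_le_rpow_of_exponent_ge (hrpos n) (le_of_lt (lt_of_lt_of_le h1 (min_le_left _ _))) hδ
      have h3 : dist y (x n) ≤ r n ^ δ := hnC.1
      rw [hnC.2] at h3
      have : dist y (x m) ≤ r n := by
        rw [Real.rpow_one] at h2; exact h3.trans h2
      exact absurd (this.trans_lt (h1.trans_le (min_le_right _ _))) (lt_irrefl _)
    exact hyr ⟨m, hym.symm⟩


open Classical in
lemma main_est {d : ℕ} (hd : 1 ≤ d) (x : ℕ → Fin d → ℝ) (hx : ∀ n i, x n i ∈ Icc (0:ℝ) 1)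
    (r : ℕ → ℝ) (hrpos : ∀ n, 0 < r n) (hrlim : Tendsto r atTop (nhds 0))
    (N : ℕ → ℕ) (hC1 : WeakRedundancy x r N) (δ : ℝ) (hδ : 1 ≤ δ)
    (s : ℝ) (hs : (d:ℝ)/δ < s) :
    μH[s] {y : Fin d → ℝ | ∃ᶠ n in atTop, Irred x n ∧ dist y (x n) ≤ r n ^ δ} = 0 := by
  have hδ0 : (0:ℝ) < δ := lt_of_lt_of_le one_pos hδ
  have hd0 : (0:ℝ) < d := by exact_mod_cast hd
  have hs0 : (0:ℝ) < s := lt_of_le_of_lt (by positivity) hs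
  have hds : (d:ℝ) < δ * s := by
    have := (div_lt_iff₀ hδ0).mp hs
    linarith
  set ε : ℝ := (δ * s - d) / 2 with hεdef
  have hε : 0 < ε := by rw [hεdef]; linarith
  set C : ℝ := (4:ℝ) ^ d * (2:ℝ) ^ s with hCdef
  have hC0 : 0 < C := by rw [hCdef]; positivity
  -- N m ≤ 2 ^ (m ε) for large m
  have hJ₀ : ∃ J₀ : ℕ, 1 ≤ J₀ ∧ ∀ m : ℕ, J₀ ≤ m → (N m : ℝ) ≤ (2:ℝ) ^ ((m:ℝ) * ε) := by
    have hev : ∀ᶠ m in atTop, Real.logb 2 (N m) / m < ε :=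
      hC1.2.2.1.eventually (gt_mem_nhds hε)
    obtain ⟨J₁, hJ₁⟩ := eventually_atTop.mp hev
    refine ⟨max J₁ 1, le_max_right _ _, fun m hm => ?_⟩
    have hm1 : 1 ≤ m := le_trans (le_max_right _ _) hm
    have hmpos : (0:ℝ) < m := by exact_mod_cast hm1
    have h1 : Real.logb 2 (N m) < (m:ℝ) * ε := by
      have := hJ₁ m (le_trans (le_max_left _ _) hm)
      calc Real.logb 2 (N m) = (Real.logb 2 (N m) / m) * m := by field_simp
        _ < ε * m := by exact mul_lt_mul_of_pos_right this hmpos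
        _ = (m:ℝ) * ε := mul_comm _ _
    have hNpos : (0:ℝ) < N m := by exact_mod_cast hC1.2.1 m
    calc (N m : ℝ) = (2:ℝ) ^ (Real.logb 2 (N m)) :=
          (Real.rpow_logb two_pos (by norm_num) hNpos).symm
      _ ≤ (2:ℝ) ^ ((m:ℝ) * ε) :=
          Real.rpow_le_rpow_of_exponent_le one_le_two h1.le
  obtain ⟨J₀, hJ₀1, hNle⟩ := hJ₀
  -- the real per-scale estimate
  have real_est : ∀ m : ℕ, J₀ ≤ m →
      ((Tset x r m).ncard : ℝ) * (2 * ((2:ℝ) ^ (-(m:ℝ))) ^ δ) ^ s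
        ≤ C * (2:ℝ) ^ (-ε * (m:ℝ)) := by
    intro m hm
    have hA1 : ((Tset x r m).ncard : ℝ) ≤ (N m) * (4 ^ d * ((2:ℝ) ^ m) ^ d) :=
      (tset_card x hx r N hC1 m).2
    have hA4 : ((2:ℝ) ^ m) ^ d = (2:ℝ) ^ ((m:ℝ) * (d:ℝ)) := by
      rw [← pow_mul, ← Real.rpow_natCast 2 (m * d)]
      push_cast
      ring_nf
    have hA3 : (2 * ((2:ℝ) ^ (-(m:ℝ))) ^ δ) ^ s
        = (2:ℝ) ^ s * (2:ℝ) ^ (-(m:ℝ) * δ * s) := by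
      rw [Real.mul_rpow (by norm_num) (by positivity)]
      congr 1
      rw [← Real.rpow_mul (by norm_num : (0:ℝ) ≤ 2), ← Real.rpow_mul (by norm_num : (0:ℝ) ≤ 2)]
    have hA2 : (N m : ℝ) ≤ (2:ℝ) ^ ((m:ℝ) * ε) := hNle m hm
    have hcard : ((Tset x r m).ncard : ℝ)
        ≤ (2:ℝ) ^ ((m:ℝ) * ε) * (4 ^ d * (2:ℝ) ^ ((m:ℝ) * (d:ℝ))) := by
      rw [← hA4]
      refine hA1.trans (mul_le_mul_of_nonneg_right hA2 (by positivity))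
    calc ((Tset x r m).ncard : ℝ) * (2 * ((2:ℝ) ^ (-(m:ℝ))) ^ δ) ^ s
        ≤ ((2:ℝ) ^ ((m:ℝ) * ε) * (4 ^ d * (2:ℝ) ^ ((m:ℝ) * (d:ℝ))))
            * ((2:ℝ) ^ s * (2:ℝ) ^ (-(m:ℝ) * δ * s)) := by
          rw [hA3]
          exact mul_le_mul_of_nonneg_right hcard (by positivity)
      _ = C * ((2:ℝ) ^ ((m:ℝ) * ε) * ((2:ℝ) ^ ((m:ℝ) * (d:ℝ)) * (2:ℝ) ^ (-(m:ℝ) * δ * s))) := by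
          rw [hCdef]; ring
      _ = C * (2:ℝ) ^ (-ε * (m:ℝ)) := by
          congr 1
          rw [← Real.rpow_add two_pos, ← Real.rpow_add two_pos]
          congr 1
          rw [hεdef]; ring
  -- covering families
  set E := {y : Fin d → ℝ | ∃ᶠ n in atTop, Irred x n ∧ dist y (x n) ≤ r n ^ δ} with hEdef
  set t : ℕ → ℕ × ℕ → Set (Fin d → ℝ) := fun J p =>
    if p.2 ∈ Tset x r (J + p.1) then closedBall (x p.2) (r p.2 ^ δ) else ∅ with htdef
  set rr : ℕ → ℝ≥0∞ := fun J => ENNReal.ofReal (2 * ((2:ℝ) ^ (-(J:ℝ))) ^ δ) with hrrdef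
  have hcast : ∀ J : ℕ, ((2:ℝ) ^ (J:ℕ))⁻¹ = (2:ℝ) ^ (-(J:ℝ)) := by
    intro J
    rw [← Real.rpow_natCast 2 J, ← Real.rpow_neg (by norm_num)]
  have hrr : Tendsto rr atTop (nhds 0) := by
    have h1 : Tendsto (fun J : ℕ => 2 * ((2:ℝ) ^ (-(J:ℝ))) ^ δ) atTop (nhds 0) := by
      have h2 : Tendsto (fun J : ℕ => 2 * ((2:ℝ)⁻¹) ^ J) atTop (nhds 0) := by
        have := tendsto_pow_atTop_nhds_zero_of_lt_one
          (by norm_num : (0:ℝ) ≤ 2⁻¹) (by norm_num : (2:ℝ)⁻¹ < 1)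
        simpa using this.const_mul 2
      refine squeeze_zero (fun J => by positivity) (fun J => ?_) h2
      have hb1 : (2:ℝ) ^ (-(J:ℝ)) ≤ 1 := by
        rw [← hcast]
        rw [inv_le_one_iff₀]; right; exact one_le_pow₀ one_le_two
      have hb0 : (0:ℝ) < (2:ℝ) ^ (-(J:ℝ)) := by positivity
      have : ((2:ℝ) ^ (-(J:ℝ))) ^ δ ≤ ((2:ℝ) ^ (-(J:ℝ))) ^ (1:ℝ) :=
        Real.rpow_le_rpow_of_exponent_ge hb0 hb1 hδ
      rw [Real.rpow_one] at this
      have h3 : ((2:ℝ)⁻¹) ^ J = (2:ℝ) ^ (-(J:ℝ)) := by rw [← hcast, inv_pow]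
      rw [h3]
      linarith
    have := ENNReal.tendsto_ofReal h1
    simpa [hrrdef] using this
  have hdiam : ∀ (c : Fin d → ℝ) (ρ : ℝ), 0 ≤ ρ →
      Metric.ediam (closedBall c ρ) ≤ ENNReal.ofReal (2 * ρ) := by
    intro c ρ hρ
    refine Metric.ediam_le fun a ha b hb => ?_
    rw [edist_dist]
    refine ENNReal.ofReal_le_ofReal ?_
    calc dist a b ≤ dist a c + dist c b := dist_triangle _ _ _
      _ ≤ ρ + ρ := add_le_add (mem_closedBall.mp ha)
          (by rw [dist_comm]; exact mem_closedBall.mp hb)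
      _ = 2 * ρ := by ring
  have ht : ∀ J : ℕ, ∀ p : ℕ × ℕ, Metric.ediam (t J p) ≤ rr J := by
    intro J p
    rcases p with ⟨j, n⟩
    rw [htdef]
    dsimp only
    split_ifs with hmem
    · refine (hdiam _ _ (Real.rpow_nonneg (hrpos n).le δ)).trans ?_
      refine ENNReal.ofReal_le_ofReal ?_
      have h1 : r n ≤ ((2:ℝ) ^ (J + j : ℕ))⁻¹ := hmem.2.2
      have h2 : ((2:ℝ) ^ (J + j : ℕ))⁻¹ ≤ ((2:ℝ) ^ (J:ℕ))⁻¹ := by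
        apply inv_anti₀ (by positivity)
        exact pow_le_pow_right₀ one_le_two (Nat.le_add_right _ _)
      have h3 : r n ^ δ ≤ ((2:ℝ) ^ (-(J:ℝ))) ^ δ := by
        rw [← hcast]
        exact Real.rpow_le_rpow (hrpos n).le (h1.trans h2) hδ0.le
      linarith
    · simp
  have hst : ∀ J : ℕ, E ⊆ ⋃ p : ℕ × ℕ, t J p := by
    intro J y hy
    rw [hEdef, Set.mem_setOf_eq] at hy
    have hpos : (0:ℝ) < ((2:ℝ) ^ (J:ℕ))⁻¹ := by positivity
    have hev : ∀ᶠ n in atTop, r n < ((2:ℝ) ^ (J:ℕ))⁻¹ :=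
      hrlim.eventually (gt_mem_nhds hpos)
    obtain ⟨n, hn1, hn2⟩ := (hy.and_eventually hev).exists
    have hexm : ∃ m : ℕ, ¬ (r n ≤ ((2:ℝ) ^ (m:ℕ))⁻¹) := by
      obtain ⟨m, hm⟩ := pow_unbounded_of_one_lt ((r n)⁻¹) (one_lt_two (α := ℝ))
      refine ⟨m, ?_⟩
      push_neg
      exact inv_lt_of_inv_lt₀ (hrpos n) hm
    set k := Nat.find hexm with hkdef
    have hkspec : ¬ (r n ≤ ((2:ℝ) ^ (k:ℕ))⁻¹) := Nat.find_spec hexm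
    have hJk : J < k := by
      rw [hkdef, Nat.lt_find_iff]
      intro m hm
      push_neg
      refine hn2.le.trans ?_
      apply inv_anti₀ (by positivity)
      exact pow_le_pow_right₀ one_le_two hm
    have hkpos : 0 < k := lt_of_le_of_lt (Nat.zero_le J) hJk
    set jj := k - 1 with hjjdef
    have hkjj : k = jj + 1 := (Nat.succ_pred_eq_of_pos hkpos).symm
    have hJjj : J ≤ jj := by omega
    have hmemT : n ∈ Tset x r jj := by
      refine ⟨hn1.1, ?_, ?_⟩
      · push_neg at hkspec
        rw [hkjj] at hkspec
        exact hkspec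
      · have hjjk : jj < k := by omega
        have := Nat.find_min hexm hjjk
        push_neg at this
        exact this
    refine Set.mem_iUnion.mpr ⟨(jj - J, n), ?_⟩
    rw [htdef]
    dsimp only
    rw [if_pos (by rwa [Nat.add_sub_cancel' hJjj])]
    exact mem_closedBall.mpr hn1.2
  -- Hausdorff measure bound
  have hmain : μH[s] E ≤ liminf (fun J => ∑' p : ℕ × ℕ, Metric.ediam (t J p) ^ s) atTop :=
    MeasureTheory.Measure.hausdorffMeasure_le_liminf_tsum s E rr hrr t
      (Eventually.of_forall ht) (Eventually.of_forall hst)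
  -- geometric bound
  set qq : ℝ≥0∞ := ENNReal.ofReal ((2:ℝ) ^ (-ε)) with hqqdef
  have hqq1 : qq < 1 := by
    rw [hqqdef, ← ENNReal.ofReal_one]
    rw [ENNReal.ofReal_lt_ofReal_iff one_pos]
    exact Real.rpow_lt_one_of_one_lt_of_neg one_lt_two (neg_lt_zero.mpr hε)
  have h1qq : (1:ℝ≥0∞) - qq ≠ 0 := by
    rw [Ne, tsub_eq_zero_iff_le]
    exact not_le.mpr hqq1
  set CC : ℝ≥0∞ := ENNReal.ofReal C * (1 - qq)⁻¹ with hCCdef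
  have hCCne : CC ≠ ⊤ := ENNReal.mul_ne_top ENNReal.ofReal_ne_top (ENNReal.inv_ne_top.mpr h1qq)
  have hq : ∀ m : ℕ, ENNReal.ofReal ((2:ℝ) ^ (-ε * (m:ℝ))) = qq ^ m := by
    intro m
    rw [hqqdef, ← ENNReal.ofReal_pow (Real.rpow_nonneg (by norm_num) _)]
    congr 1
    rw [← Real.rpow_natCast ((2:ℝ) ^ (-ε)) m, ← Real.rpow_mul (by norm_num)]
  have hfb : ∀ J : ℕ, J₀ ≤ J → (∑' p : ℕ × ℕ, Metric.ediam (t J p) ^ s) ≤ CC * qq ^ J := by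
    intro J hJ
    rw [ENNReal.tsum_prod']
    have inner : ∀ j : ℕ, (∑' n : ℕ, Metric.ediam (t J (j, n)) ^ s)
        ≤ ENNReal.ofReal C * qq ^ (J + j) := by
      intro j
      have hmJ : J₀ ≤ J + j := le_trans hJ (Nat.le_add_right _ _)
      have hfin := (tset_card x hx r N hC1 (J + j)).1
      have hzero : ∀ n ∉ hfin.toFinset, Metric.ediam (t J (j, n)) ^ s = 0 := by
        intro n hn
        rw [Set.Finite.mem_toFinset] at hn
        rw [htdef]
        dsimp only
        rw [if_neg hn, Metric.ediam_empty]
        exact ENNReal.zero_rpow_of_pos hs0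
      rw [tsum_eq_sum hzero]
      have hterm : ∀ n ∈ hfin.toFinset, Metric.ediam (t J (j,n)) ^ s
          ≤ ENNReal.ofReal ((2 * ((2:ℝ) ^ (-((J+j:ℕ):ℝ))) ^ δ) ^ s) := by
        intro n hn
        rw [Set.Finite.mem_toFinset] at hn
        rw [htdef]
        dsimp only
        rw [if_pos hn]
        have h1 : Metric.ediam (closedBall (x n) (r n ^ δ))
            ≤ ENNReal.ofReal (2 * r n ^ δ) :=
          hdiam _ _ (Real.rpow_nonneg (hrpos n).le δ)
        refine le_trans (ENNReal.rpow_le_rpow h1 hs0.le) ?_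
        rw [ENNReal.ofReal_rpow_of_nonneg (mul_nonneg (by norm_num) (Real.rpow_nonneg (hrpos n).le δ)) hs0.le]
        refine ENNReal.ofReal_le_ofReal ?_
        refine Real.rpow_le_rpow (mul_nonneg (by norm_num) (Real.rpow_nonneg (hrpos n).le δ)) ?_ hs0.le
        refine mul_le_mul_of_nonneg_left ?_ (by norm_num)
        rw [← hcast]
        exact Real.rpow_le_rpow (hrpos n).le hn.2.2 hδ0.le
      calc ∑ n ∈ hfin.toFinset, Metric.ediam (t J (j,n)) ^ s
          ≤ hfin.toFinset.card • ENNReal.ofReal ((2 * ((2:ℝ) ^ (-((J+j:ℕ):ℝ))) ^ δ) ^ s) :=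
            Finset.sum_le_card_nsmul _ _ _ hterm
        _ = (((Tset x r (J+j)).ncard : ℕ) : ℝ≥0∞)
              * ENNReal.ofReal ((2 * ((2:ℝ) ^ (-((J+j:ℕ):ℝ))) ^ δ) ^ s) := by
            rw [nsmul_eq_mul, Set.ncard_eq_toFinset_card _ hfin]
        _ = ENNReal.ofReal (((Tset x r (J+j)).ncard : ℝ)
              * (2 * ((2:ℝ) ^ (-((J+j:ℕ):ℝ))) ^ δ) ^ s) := by
            rw [← ENNReal.ofReal_natCast, ← ENNReal.ofReal_mul (by positivity)]
        _ ≤ ENNReal.ofReal (C * (2:ℝ) ^ (-ε * ((J+j:ℕ):ℝ))) :=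
            ENNReal.ofReal_le_ofReal (real_est (J+j) hmJ)
        _ = ENNReal.ofReal C * qq ^ (J + j) := by
            rw [ENNReal.ofReal_mul hC0.le, hq (J+j)]
    calc (∑' j, ∑' n, Metric.ediam (t J (j, n)) ^ s)
        ≤ ∑' j : ℕ, ENNReal.ofReal C * qq ^ (J + j) := ENNReal.tsum_le_tsum inner
      _ = ENNReal.ofReal C * (qq ^ J * ∑' j : ℕ, qq ^ j) := by
          rw [← ENNReal.tsum_mul_left, ← ENNReal.tsum_mul_left]
          congr 1
          funext j
          rw [pow_add]
      _ = CC * qq ^ J := by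
          rw [ENNReal.tsum_geometric, hCCdef]
          ring
  have hBlim : Tendsto (fun J : ℕ => CC * qq ^ J) atTop (nhds 0) := by
    have h0 := ENNReal.tendsto_pow_atTop_nhds_zero_of_lt_one hqq1
    have := ENNReal.Tendsto.const_mul h0 (Or.inr hCCne)
    simpa using this
  have hliminf : liminf (fun J => ∑' p : ℕ × ℕ, Metric.ediam (t J p) ^ s) atTop
      ≤ liminf (fun J : ℕ => CC * qq ^ J) atTop :=
    liminf_le_liminf (eventually_atTop.mpr ⟨J₀, hfb⟩)
  rw [hBlim.liminf_eq] at hliminf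
  exact le_zero_iff.mp (hmain.trans hliminf)


/-- If a system `((x n, r n))` in `[0,1]^d` satisfies the weak redundancy condition `C₁`,
then for every `δ ≥ 1` the Hausdorff dimension of
`L_δ = {y : dist y (x n) ≤ r n ^ δ for infinitely many n}` is at most `d / δ`. -/
theorem stmt2 (d : ℕ) (hd : 1 ≤ d)
    (x : ℕ → Fin d → ℝ) (hx : ∀ n i, x n i ∈ Icc (0:ℝ) 1)
    (r : ℕ → ℝ) (hrpos : ∀ n, 0 < r n) (hrmono : Antitone r)
    (hrlim : Tendsto r atTop (nhds 0))
    (N : ℕ → ℕ) (hC1 : WeakRedundancy x r N)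
    (δ : ℝ) (hδ : 1 ≤ δ) :
    dimH {y : Fin d → ℝ | ∃ᶠ n in atTop, dist y (x n) ≤ r n ^ δ}
      ≤ ENNReal.ofReal ((d : ℝ) / δ) := by
  have hδ0 : (0:ℝ) < δ := lt_of_lt_of_le one_pos hδ
  have hdd : (0:ℝ) ≤ (d : ℝ) / δ := by positivity
  refine le_trans (dimH_mono (decomp x r hrpos hrmono hrlim δ hδ)) ?_
  rw [dimH_union]
  refine max_le ?_ ?_
  · refine dimH_le fun s' hs' => ?_
    by_contra hlt
    push_neg at hlt
    have hss : (d:ℝ)/δ < (s' : ℝ) := by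
      rw [← ENNReal.ofReal_coe_nnreal] at hlt
      exact (ENNReal.ofReal_lt_ofReal_iff_of_nonneg hdd).mp hlt
    have h0 := main_est hd x hx r hrpos hrlim N hC1 δ hδ (s' : ℝ) hss
    rw [hs'] at h0
    exact ENNReal.top_ne_zero h0
  · rw [dimH_countable (Set.countable_range x)]
    exact zero_le
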